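/- Let β > 0, let m ≥ 1 and d ≥ 3 be integers, and set S = {0,1,…,m} and S′ = {m+d, m+d+1,…, 2m+d}. Under the Bernoulli product measure ν = ν_{p,β}, the probability that every edge {x,y} with x ∈ S and y ∈ S′ is closed equals exp( −β Σ_{x∈S, y∈S′} (y−x)^{−2} ), and this is at most ( d(2m+d) / (m+d)² )^{β(1−2/d)²}. -/

import Mathlib

open MeasureTheory ProbabilityTheory

/-- Edge occupation probability: `p` for nearest neighbours, `1 - exp(-β/|x-y|²)` otherwise. -/
noncomputable def edgeProb (p β : ℝ) (x y : ℤ) : ℝ :=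
  if (x - y).natAbs = 1 then p else 1 - Real.exp (-β / ((x - y : ℤ) : ℝ) ^ 2)

/-- `ν` is the Bernoulli product measure `ν_{p,β}`. -/
def IsBernoulliEdgeMeasure (p β : ℝ) (ν : Measure (Sym2 ℤ → Bool)) : Prop :=
  iIndepFun (fun (e : Sym2 ℤ) (ω : Sym2 ℤ → Bool) => ω e) ν ∧
    ∀ x y : ℤ, x ≠ y → ν {ω | ω s(x, y) = true} = ENNReal.ofReal (edgeProb p β x y)


lemma log_diff_le_inv {a : ℝ} (ha : 0 < a) : Real.log (a+1) - Real.log a ≤ a⁻¹ := by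
  have h := Real.log_le_sub_one_of_pos (show (0:ℝ) < (a+1)/a by positivity)
  rw [Real.log_div (by positivity) (ne_of_gt ha)] at h
  have h2 : (a+1)/a - 1 = a⁻¹ := by field_simp; ring
  linarith

lemma inv_le_log_diff {a : ℝ} (ha : 0 < a) : (a+1)⁻¹ ≤ Real.log (a+1) - Real.log a := by
  have h := Real.log_le_sub_one_of_pos (show (0:ℝ) < a/(a+1) by positivity)
  rw [Real.log_div (ne_of_gt ha) (by positivity)] at h
  have h2 : a/(a+1) - 1 = -(a+1)⁻¹ := by field_simp; ring
  linarith

lemma Icc_map_range (a : ℤ) (n : ℕ) :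
    Finset.Icc a (a + n) = (Finset.range (n+1)).map
      ⟨fun i : ℕ => a + (i : ℤ), show Function.Injective (fun i : ℕ => a + (i : ℤ)) from fun i j h => by
        have : (i : ℤ) = j := by simpa using h
        exact_mod_cast this⟩ := by
  ext x
  simp only [Finset.mem_Icc, Finset.mem_map, Finset.mem_range, Function.Embedding.coeFn_mk]
  constructor
  · intro ⟨h1, h2⟩
    exact ⟨(x - a).toNat, by omega, by omega⟩
  · rintro ⟨i, hi, rfl⟩
    omega

lemma key_sum (m d : ℕ) (hm : 1 ≤ m) (hd : 3 ≤ d) :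
    (1 - 2/(d:ℝ))^2 * (Real.log (((m:ℝ)+(d:ℝ))^2) - Real.log ((d:ℝ)*(2*(m:ℝ)+(d:ℝ)))) ≤
    ∑ x ∈ Finset.Icc (0:ℤ) (m:ℤ), ∑ y ∈ Finset.Icc ((m:ℤ)+(d:ℤ)) (2*(m:ℤ)+(d:ℤ)),
      (((y - x : ℤ):ℝ)^2)⁻¹ := by
  set M : ℝ := (m : ℝ) with hM
  set D : ℝ := (d : ℝ) with hD
  have hM1 : 1 ≤ M := by rw [hM]; exact_mod_cast hm
  have hD3 : 3 ≤ D := by rw [hD]; exact_mod_cast hd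
  have hM1 : 1 ≤ M := by rw [hM]; exact_mod_cast hm
  have hD3 : 3 ≤ D := by rw [hD]; exact_mod_cast hd
  -- reindex
  have e1 : Finset.Icc (0:ℤ) (m:ℤ) = Finset.Icc (0:ℤ) (0 + (m:ℤ)) := by ring_nf
  have e2 : Finset.Icc ((m:ℤ)+(d:ℤ)) (2*(m:ℤ)+(d:ℤ))
      = Finset.Icc ((m:ℤ)+(d:ℤ)) (((m:ℤ)+(d:ℤ)) + (m:ℤ)) := by ring_nf
  rw [e1, e2, Icc_map_range 0 m, Icc_map_range ((m:ℤ)+(d:ℤ)) m]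
  rw [Finset.sum_map]
  simp only [Function.Embedding.coeFn_mk, Finset.sum_map]
  -- now a double sum over range (m+1)
  have hsum : ∀ i ∈ Finset.range (m+1), ∀ j ∈ Finset.range (m+1),
      ((((m:ℤ) + (d:ℤ) + (j:ℤ) - (0 + (i:ℤ)) : ℤ) : ℝ)^2)⁻¹ = ((M + D + j - i)^2)⁻¹ := by
    intro i _ j _
    rw [hM, hD]
    push_cast
    ring_nf
  rw [Finset.sum_congr rfl (fun i hi => Finset.sum_congr rfl (fun j hj => hsum i hi j hj))]
  -- inner telescoping bound
  have inner : ∀ i ∈ Finset.range (m+1),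
      (M + D - i)⁻¹ - (M + D + (m+1) - i)⁻¹ ≤ ∑ j ∈ Finset.range (m+1), ((M + D + j - i)^2)⁻¹ := by
    intro i hi
    have hi' : (i : ℝ) ≤ M := by
      have : i ≤ m := by simpa [Nat.lt_succ_iff] using hi
      rw [hM]; exact_mod_cast this
    have tel : ∑ j ∈ Finset.range (m+1),
        ((M + D + j - i)⁻¹ - (M + D + (j+1) - i)⁻¹) = (M + D - i)⁻¹ - (M + D + (m+1) - i)⁻¹ := by
      have := Finset.sum_range_sub' (f := fun j : ℕ => (M + D + j - i)⁻¹) (m+1)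
      push_cast at this ⊢
      convert this using 2 <;> push_cast <;> ring_nf
    rw [← tel]
    apply Finset.sum_le_sum
    intro j _
    have hk : (3:ℝ) ≤ M + D + j - i := by
      have : (0:ℝ) ≤ (j:ℝ) := Nat.cast_nonneg j
      linarith
    have hkpos : (0:ℝ) < M + D + j - i := by linarith
    set k : ℝ := M + D + j - i with hkdef
    have step : k⁻¹ - (M + D + (j+1) - i)⁻¹ = (k * (k+1))⁻¹ := by
      have : M + D + (j+1) - i = k + 1 := by rw [hkdef]; ring
      rw [this]
      field_simp
      ring
    rw [step]
    apply inv_anti₀ (by positivity)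
    nlinarith
  have outer : ∑ i ∈ Finset.range (m+1), ((M + D - i)⁻¹ - (M + D + (m+1) - i)⁻¹)
      ≤ ∑ i ∈ Finset.range (m+1), ∑ j ∈ Finset.range (m+1), ((M + D + j - i)^2)⁻¹ :=
    Finset.sum_le_sum inner
  -- lower bound outer sum by telescoping logs
  have louter : (Real.log (M+D+1) - Real.log D) - (Real.log (2*M+D+1) - Real.log (M+D))
      ≤ ∑ i ∈ Finset.range (m+1), ((M + D - i)⁻¹ - (M + D + (m+1) - i)⁻¹) := by
    have telG : ∑ i ∈ Finset.range (m+1),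
        ((fun i : ℕ => Real.log (M + D + 1 - i)) i - (fun i : ℕ => Real.log (M + D + 1 - i)) (i+1))
        = Real.log (M+D+1) - Real.log (M + D + 1 - (m+1)) :=
      by simpa using Finset.sum_range_sub' (f := fun i : ℕ => Real.log (M + D + 1 - i)) (m+1)
    have telH : ∑ i ∈ Finset.range (m+1),
        ((fun i : ℕ => Real.log (2*M + D + 1 - i)) i - (fun i : ℕ => Real.log (2*M + D + 1 - i)) (i+1))
        = Real.log (2*M+D+1) - Real.log (2*M + D + 1 - (m+1)) :=
      by simpa using Finset.sum_range_sub' (f := fun i : ℕ => Real.log (2*M + D + 1 - i)) (m+1)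
    have hMD : M + D + 1 - ((m:ℝ)+1) = D := by rw [hM]; ring
    have hMD2 : 2*M + D + 1 - ((m:ℝ)+1) = M + D := by rw [hM]; ring
    have expand : ∑ i ∈ Finset.range (m+1),
        ((Real.log (M + D + 1 - i) - Real.log (M + D + 1 - (i+1:ℕ)))
          - (Real.log (2*M + D + 1 - i) - Real.log (2*M + D + 1 - (i+1:ℕ))))
        = (Real.log (M+D+1) - Real.log D) - (Real.log (2*M+D+1) - Real.log (M+D)) := by
      rw [Finset.sum_sub_distrib, telG, telH]
      push_cast at hMD hMD2 ⊢
      rw [hMD, hMD2]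
    rw [← expand]
    apply Finset.sum_le_sum
    intro i hi
    have hi' : (i : ℝ) ≤ M := by
      have : i ≤ m := by simpa [Nat.lt_succ_iff] using hi
      rw [hM]; exact_mod_cast this
    have h1pos : (0:ℝ) < M + D - i := by linarith
    have h2pos : (0:ℝ) < 2*M + D - i := by linarith
    have hG : Real.log (M + D + 1 - i) - Real.log (M + D + 1 - (i+1:ℕ)) ≤ (M + D - i)⁻¹ := by
      have := log_diff_le_inv h1pos
      have e : M + D - i + 1 = M + D + 1 - i := by ring
      have e2 : M + D + 1 - ((i:ℝ)+1) = M + D - i := by ring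
      push_cast
      rw [e2, ← e]
      linarith
    have hH : (M + D + ((m:ℝ)+1) - i)⁻¹ ≤ Real.log (2*M + D + 1 - i) - Real.log (2*M + D + 1 - (i+1:ℕ)) := by
      have := inv_le_log_diff h2pos
      have e : 2*M + D - i + 1 = 2*M + D + 1 - i := by ring
      have e2 : 2*M + D + 1 - ((i:ℝ)+1) = 2*M + D - i := by ring
      have e3 : M + D + ((m:ℝ)+1) - i = 2*M + D - i + 1 := by rw [hM]; ring
      push_cast
      rw [e2, e3, ← e]
      linarith
    push_cast at hG hH ⊢
    linarith
  -- final log arithmetic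
  have hc0 : (0:ℝ) ≤ (1 - 2/D)^2 := sq_nonneg _
  have hc1 : (1 - 2/D)^2 ≤ 1 := by
    have h1 : 2/D ≤ 1 := by
      rw [div_le_one (by linarith)]; linarith
    have h2 : 0 < 2/D := by positivity
    nlinarith
  have hR0 : 0 ≤ Real.log ((M+D)^2) - Real.log (D*(2*M+D)) := by
    have : D*(2*M+D) ≤ (M+D)^2 := by nlinarith
    have := Real.log_le_log (by positivity) this
    linarith
  have hLR : Real.log ((M+D)^2) - Real.log (D*(2*M+D))
      ≤ (Real.log (M+D+1) - Real.log D) - (Real.log (2*M+D+1) - Real.log (M+D)) := by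
    have hsq : Real.log ((M+D)^2) = 2 * Real.log (M+D) := by
      rw [sq, Real.log_mul (by positivity) (by positivity)]; ring
    have hmul : Real.log (D*(2*M+D)) = Real.log D + Real.log (2*M+D) := by
      rw [Real.log_mul (by positivity) (by positivity)]
    have key : Real.log ((M+D)*(2*M+D+1)) ≤ Real.log ((M+D+1)*(2*M+D)) := by
      apply Real.log_le_log (by positivity)
      nlinarith
    rw [Real.log_mul (by positivity) (by positivity),
        Real.log_mul (by positivity) (by positivity)] at key
    linarith
  calc (1 - 2/D)^2 * (Real.log ((M+D)^2) - Real.log (D*(2*M+D)))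
      ≤ 1 * (Real.log ((M+D)^2) - Real.log (D*(2*M+D))) := by nlinarith
    _ ≤ (Real.log (M+D+1) - Real.log D) - (Real.log (2*M+D+1) - Real.log (M+D)) := by linarith
    _ ≤ _ := le_trans louter outer

lemma part_one (β p : ℝ) (hβ : 0 < β) (m d : ℕ) (hm : 1 ≤ m) (hd : 3 ≤ d)
    (ν : Measure (Sym2 ℤ → Bool)) [IsProbabilityMeasure ν]
    (hν : IsBernoulliEdgeMeasure p β ν) :
    ν {ω | ∀ x ∈ Finset.Icc (0 : ℤ) (m : ℤ),
        ∀ y ∈ Finset.Icc ((m : ℤ) + (d : ℤ)) (2 * (m : ℤ) + (d : ℤ)), ω s(x, y) = false} =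
      ENNReal.ofReal (Real.exp (-β *
        ∑ x ∈ Finset.Icc (0 : ℤ) (m : ℤ),
          ∑ y ∈ Finset.Icc ((m : ℤ) + (d : ℤ)) (2 * (m : ℤ) + (d : ℤ)),
            (((y - x : ℤ) : ℝ) ^ 2)⁻¹)) := by
  set S : Finset ℤ := Finset.Icc (0 : ℤ) (m : ℤ) with hS
  set S' : Finset ℤ := Finset.Icc ((m : ℤ) + (d : ℤ)) (2 * (m : ℤ) + (d : ℤ)) with hS'
  have hlt : ∀ x ∈ S, ∀ y ∈ S', x < y := by
    intro x hx y hy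
    simp only [hS, hS', Finset.mem_Icc] at hx hy
    omega
  -- the edge finset
  set T : Finset (ℤ × ℤ) := S ×ˢ S' with hT
  set g : ℤ × ℤ → Sym2 ℤ := fun p => s(p.1, p.2) with hg
  have hinj : Set.InjOn g T := by
    intro a ha b hb hab
    simp only [hT, Finset.coe_product, Set.mem_prod] at ha hb
    simp only [hg, Sym2.eq, Sym2.rel_iff', Prod.mk.injEq, Prod.swap_prod_mk] at hab
    rcases hab with ⟨h1, h2⟩ | ⟨h1, h2⟩
    · exact Prod.ext h1 h2
    · exfalso
      have := hlt a.1 ha.1 a.2 ha.2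
      have := hlt b.1 hb.1 b.2 hb.2
      omega
  have hset : {ω : Sym2 ℤ → Bool | ∀ x ∈ S, ∀ y ∈ S', ω s(x, y) = false}
      = ⋂ e ∈ T.image g, {ω : Sym2 ℤ → Bool | ω e = false} := by
    ext ω
    simp only [Set.mem_setOf_eq, Set.mem_iInter, Finset.mem_image, hg, hT,
      Finset.mem_product]
    constructor
    · rintro h e ⟨⟨x, y⟩, ⟨hx, hy⟩, rfl⟩
      exact h x hx y hy
    · intro h x hx y hy
      exact h s(x, y) ⟨⟨x, y⟩, ⟨hx, hy⟩, rfl⟩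
  rw [hset, hν.1.meas_biInter (S := T.image g) (s := fun e => {ω : Sym2 ℤ → Bool | ω e = false}) (fun e _ => ⟨{false}, trivial, rfl⟩)]
  rw [Finset.prod_image (fun a ha b hb h => hinj ha hb h), hT, Finset.prod_product]
  have hedge : ∀ x ∈ S, ∀ y ∈ S', ν {ω : Sym2 ℤ → Bool | ω (g (x, y)) = false}
      = ENNReal.ofReal (Real.exp (-β * ((((y : ℤ) - x : ℤ) : ℝ) ^ 2)⁻¹)) := by
    intro x hx y hy
    have hxy : x + 3 ≤ y := by
      simp only [hS, hS', Finset.mem_Icc] at hx hy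
      omega
    have hne : x ≠ y := by omega
    have hmeas : MeasurableSet {ω : Sym2 ℤ → Bool | ω s(x, y) = true} :=
      show MeasurableSet ((fun ω : Sym2 ℤ → Bool => ω s(x, y)) ⁻¹' {true}) from
        measurable_pi_apply s(x, y) (measurableSet_singleton true)
    have hcompl : {ω : Sym2 ℤ → Bool | ω (g (x, y)) = false}
        = {ω : Sym2 ℤ → Bool | ω s(x, y) = true}ᶜ := by
      ext ω; simp [hg]
    set E : ℝ := Real.exp (-β / ((x - y : ℤ) : ℝ) ^ 2) with hE
    have hE1 : E ≤ 1 := by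
      rw [hE]
      apply Real.exp_le_one_iff.mpr
      apply div_nonpos_of_nonpos_of_nonneg (by linarith) (by positivity)
    have hEP : edgeProb p β x y = 1 - E := by
      rw [edgeProb, if_neg]
      omega
    have hEeq : E = Real.exp (-β * ((((y : ℤ) - x : ℤ) : ℝ) ^ 2)⁻¹) := by
      rw [hE]
      congr 1
      have h2 : ((x - y : ℤ) : ℝ) ^ 2 = (((y - x : ℤ)) : ℝ) ^ 2 := by push_cast; ring
      rw [h2, div_eq_mul_inv, neg_mul]
    rw [hcompl, prob_compl_eq_one_sub hmeas, hν.2 x y hne, hEP, ← hEeq,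
      ← ENNReal.ofReal_one, ← ENNReal.ofReal_sub 1 (by linarith : (0:ℝ) ≤ 1 - E)]
    norm_num
  rw [Finset.prod_congr rfl (fun x hx => Finset.prod_congr rfl (fun y hy => hedge x hx y hy))]
  rw [Finset.prod_congr rfl (fun x (hx : x ∈ S) =>
    (ENNReal.ofReal_prod_of_nonneg (fun y _ => (Real.exp_pos _).le)).symm)]
  rw [← ENNReal.ofReal_prod_of_nonneg (fun x (_ : x ∈ S) => Finset.prod_nonneg fun y _ => Real.exp_nonneg _)]
  congr 1
  rw [Finset.prod_congr rfl (fun x (_ : x ∈ S) => (Real.exp_sum S' _).symm), ← Real.exp_sum]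
  congr 1
  rw [Finset.mul_sum]
  apply Finset.sum_congr rfl
  intro x _
  rw [Finset.mul_sum]

/-- With `S = {0,…,m}` and `S' = {m+d,…,2m+d}`, `d ≥ 3`, the probability that all edges
between `S` and `S'` are closed equals `exp(-β Σ_{x∈S,y∈S'} (y-x)^{-2})`, which is at most
`(d(2m+d)/(m+d)²)^{β(1-2/d)²}`. -/
theorem all_edges_closed_estimate (β p : ℝ) (hβ : 0 < β) (hp0 : 0 < p) (hp1 : p < 1)
    (m d : ℕ) (hm : 1 ≤ m) (hd : 3 ≤ d)
    (ν : Measure (Sym2 ℤ → Bool)) [IsProbabilityMeasure ν]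
    (hν : IsBernoulliEdgeMeasure p β ν) :
    ν {ω | ∀ x ∈ Finset.Icc (0 : ℤ) (m : ℤ),
        ∀ y ∈ Finset.Icc ((m : ℤ) + (d : ℤ)) (2 * (m : ℤ) + (d : ℤ)), ω s(x, y) = false} =
      ENNReal.ofReal (Real.exp (-β *
        ∑ x ∈ Finset.Icc (0 : ℤ) (m : ℤ),
          ∑ y ∈ Finset.Icc ((m : ℤ) + (d : ℤ)) (2 * (m : ℤ) + (d : ℤ)),
            (((y - x : ℤ) : ℝ) ^ 2)⁻¹)) ∧
    ν {ω | ∀ x ∈ Finset.Icc (0 : ℤ) (m : ℤ),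
        ∀ y ∈ Finset.Icc ((m : ℤ) + (d : ℤ)) (2 * (m : ℤ) + (d : ℤ)), ω s(x, y) = false} ≤
      ENNReal.ofReal
        (((d : ℝ) * (2 * (m : ℝ) + (d : ℝ)) / ((m : ℝ) + (d : ℝ)) ^ 2) ^
          (β * (1 - 2 / (d : ℝ)) ^ 2)) := by
  have h1 := part_one β p hβ m d hm hd ν hν
  refine ⟨h1, ?_⟩
  rw [h1]
  apply ENNReal.ofReal_le_ofReal
  have hM1 : (1:ℝ) ≤ (m:ℝ) := by exact_mod_cast hm
  have hD3 : (3:ℝ) ≤ (d:ℝ) := by exact_mod_cast hd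
  have hBpos : (0:ℝ) < (d : ℝ) * (2 * (m : ℝ) + (d : ℝ)) / ((m : ℝ) + (d : ℝ)) ^ 2 := by
    positivity
  rw [Real.rpow_def_of_pos hBpos]
  apply Real.exp_le_exp.mpr
  have hlogB : Real.log ((d : ℝ) * (2 * (m : ℝ) + (d : ℝ)) / ((m : ℝ) + (d : ℝ)) ^ 2)
      = Real.log ((d:ℝ) * (2 * (m:ℝ) + (d:ℝ))) - Real.log (((m:ℝ) + (d:ℝ))^2) := by
    rw [Real.log_div (by positivity) (by positivity)]
  have key := key_sum m d hm hd
  rw [hlogB]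
  nlinarith [mul_le_mul_of_nonneg_left key hβ.le]
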